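/- For the thresholding rule δᵢ(t) = 1{fdrᵢ(X) < t} where fdrᵢ(X) = P(μᵢ = 0 | X), the Bayesian false discovery rate BFDR(t) = E[Σᵢ 1{fdrᵢ(X)<t}·fdrᵢ(X) / max(Σᵢ 1{fdrᵢ(X)<t}, 1)] is a nondecreasing function of t ∈ (0, ∞). -/

import Mathlib

open MeasureTheory ProbabilityTheory

private lemma bfdr_aux {ι : Type*} [DecidableEq ι] (s s' : Finset ι) (f : ι → ℝ)
    (t : ℝ) (ht : 0 < t) (hsub : s ⊆ s') (h0 : ∀ i ∈ s', 0 ≤ f i)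
    (hs : ∀ i ∈ s, f i ≤ t) (hs' : ∀ i ∈ s' \ s, t ≤ f i) :
    (∑ i ∈ s, f i) / max (s.card : ℝ) 1 ≤ (∑ i ∈ s', f i) / max (s'.card : ℝ) 1 := by
  rcases s.eq_empty_or_nonempty with rfl | hne
  · simp only [Finset.sum_empty, zero_div]
    exact div_nonneg (Finset.sum_nonneg h0) (le_trans zero_le_one (le_max_right _ 1))
  · have hm : (1 : ℝ) ≤ s.card := by exact_mod_cast hne.card_pos
    have hm' : (1 : ℝ) ≤ s'.card := le_trans hm (by exact_mod_cast Finset.card_le_card hsub)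
    rw [max_eq_left hm, max_eq_left hm']
    have hsplit : ∑ i ∈ s', f i = ∑ i ∈ s, f i + ∑ i ∈ s' \ s, f i := by
      rw [← Finset.sum_sdiff hsub, add_comm]
    have hcard : (s'.card : ℝ) = s.card + (s' \ s).card := by
      rw [Finset.card_sdiff_of_subset hsub]
      push_cast [Nat.cast_sub (Finset.card_le_card hsub)]
      ring
    set S := ∑ i ∈ s, f i
    set T := ∑ i ∈ s' \ s, f i
    set m := (s.card : ℝ)
    set k := ((s' \ s).card : ℝ)
    have hk : 0 ≤ k := Nat.cast_nonneg _
    have hSm : S ≤ m * t := by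
      calc S ≤ ∑ _i ∈ s, t := Finset.sum_le_sum hs
        _ = m * t := by simp [mul_comm, m]
    have hTk : k * t ≤ T := by
      calc k * t = ∑ _i ∈ s' \ s, t := by simp [mul_comm, k]
        _ ≤ T := Finset.sum_le_sum hs'
    rw [hsplit, hcard, div_le_div_iff₀ (by linarith) (by linarith)]
    have h1 : S * k ≤ m * t * k := mul_le_mul_of_nonneg_right hSm hk
    have h2 : m * (k * t) ≤ m * T := mul_le_mul_of_nonneg_left hTk (by linarith)
    nlinarith

/-- Monotonicity of the Bayesian FDR of the thresholding rule.  With posterior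
null probabilities `fdrᵢ(X) ∈ [0,1]` and the rule `δᵢ(t) = 1{fdrᵢ(X) < t}`,
`BFDR(t) = E[Σᵢ 1{fdrᵢ<t} fdrᵢ / max(Σᵢ 1{fdrᵢ<t}, 1)]` is nondecreasing in
`t ∈ (0, ∞)`. -/
theorem BFDR_monotone
    {Ω : Type*} [MeasureSpace Ω] [IsProbabilityMeasure (ℙ : Measure Ω)]
    (p : ℕ) (fdr : Fin p → Ω → ℝ)
    (hmeas : ∀ i, Measurable (fdr i))
    (hfdr : ∀ i x, fdr i x ∈ Set.Icc (0:ℝ) 1)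
    (BFDR : ℝ → ℝ)
    (hBFDR : ∀ t, BFDR t = ∫ x,
      (∑ i, if fdr i x < t then fdr i x else 0)
        / max (∑ i, if fdr i x < t then (1:ℝ) else 0) 1 ∂(ℙ : Measure Ω)) :
    ∀ t t' : ℝ, 0 < t → t ≤ t' → BFDR t ≤ BFDR t' := by
  intro t t' ht htt'
  rw [hBFDR t, hBFDR t']
  -- abbreviation for integrand
  set F : ℝ → Ω → ℝ := fun s x =>
    (∑ i, if fdr i x < s then fdr i x else 0)
      / max (∑ i, if fdr i x < s then (1:ℝ) else 0) 1 with hF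
  have hdenom : ∀ s x, (1:ℝ) ≤ max (∑ i, if fdr i x < s then (1:ℝ) else 0) 1 :=
    fun s x => le_max_right _ 1
  have hnum_nonneg : ∀ s x, (0:ℝ) ≤ ∑ i, if fdr i x < s then fdr i x else 0 := by
    intro s x
    refine Finset.sum_nonneg fun i _ => ?_
    split <;> simp [(hfdr i x).1]
  have hnum_le : ∀ s x, (∑ i, if fdr i x < s then fdr i x else 0) ≤ p := by
    intro s x
    calc (∑ i, if fdr i x < s then fdr i x else 0) ≤ ∑ _i : Fin p, (1:ℝ) := by
          refine Finset.sum_le_sum fun i _ => ?_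
          split
          · exact (hfdr i x).2
          · norm_num
      _ = p := by simp
  have hInt : ∀ s : ℝ, Integrable (F s) (ℙ : Measure Ω) := by
    intro s
    have hmF : Measurable (F s) := by
      apply Measurable.div
      · exact Finset.measurable_sum _ fun i _ =>
          Measurable.ite (measurableSet_lt (hmeas i) measurable_const) (hmeas i)
            measurable_const
      · exact (Finset.measurable_sum _ fun i _ =>
          Measurable.ite (measurableSet_lt (hmeas i) measurable_const) measurable_const
            measurable_const).max measurable_const
    refine (integrable_const (p : ℝ)).mono' hmF.aestronglyMeasurable ?_
    filter_upwards with x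
    have h0 : 0 ≤ F s x :=
      div_nonneg (hnum_nonneg s x) (le_trans zero_le_one (hdenom s x))
    have h1 : F s x ≤ p :=
      le_trans (div_le_self (hnum_nonneg s x) (hdenom s x)) (hnum_le s x)
    rw [Real.norm_eq_abs, abs_of_nonneg h0]
    simpa using h1
  refine integral_mono (hInt t) (hInt t') fun x => ?_
  -- pointwise inequality via bfdr_aux
  classical
  have key : ∀ s : ℝ,
      (∑ i, if fdr i x < s then fdr i x else 0)
        / max (∑ i, if fdr i x < s then (1:ℝ) else 0) 1
      = (∑ i ∈ Finset.univ.filter (fun i => fdr i x < s), fdr i x)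
        / max ((Finset.univ.filter (fun i => fdr i x < s)).card : ℝ) 1 := by
    intro s
    congr 1
    · rw [Finset.sum_filter]
    · congr 1
      rw [Finset.card_eq_sum_ones, Finset.sum_filter]
      push_cast
      rfl
  simp only [hF]
  rw [key t, key t']
  refine bfdr_aux _ _ _ t ht ?_ ?_ ?_ ?_
  · intro i hi
    simp only [Finset.mem_filter] at *
    exact ⟨hi.1, lt_of_lt_of_le hi.2 htt'⟩
  · intro i _; exact (hfdr i x).1
  · intro i hi
    simp only [Finset.mem_filter] at hi
    exact le_of_lt hi.2
  · intro i hi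
    simp only [Finset.mem_sdiff, Finset.mem_filter] at hi
    exact le_of_not_gt (fun h => hi.2 ⟨Finset.mem_univ i, h⟩)
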